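/- Let k ≥ 2 and let A ∈ GL(n,ℤ) satisfy A ≡ I mod 2 and A² ≡ I mod 2^{k+1}. Then there exists p ∈ GL(n,ℤ) such that p⁻¹Ap is congruent mod 2^k to a diagonal matrix with entries ±1. -/

import Mathlib

open Matrix

namespace DiagInvol

variable {n : ℕ}

lemma dvd_entries_mul_left {d : ℤ} {X : Matrix (Fin n) (Fin n) ℤ}
    (h : ∀ a b, d ∣ X a b) (Y : Matrix (Fin n) (Fin n) ℤ) : ∀ a b, d ∣ (Y * X) a b := by
  intro a b
  rw [Matrix.mul_apply]
  exact Finset.dvd_sum fun k _ => (h k b).mul_left _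

lemma dvd_entries_mul_right {d : ℤ} {X : Matrix (Fin n) (Fin n) ℤ}
    (h : ∀ a b, d ∣ X a b) (Y : Matrix (Fin n) (Fin n) ℤ) : ∀ a b, d ∣ (X * Y) a b := by
  intro a b
  rw [Matrix.mul_apply]
  exact Finset.dvd_sum fun k _ => (h a k).mul_right _

lemma transvec_step (ε : Fin n → ℤ) (hε : ∀ i, ε i = 1 ∨ ε i = -1)
    (j m : ℕ) (hj2 : 2 ≤ j) (hmj : j ≤ m) (hm2j : m + 1 ≤ 2*j)
    (A : Matrix (Fin n) (Fin n) ℤ) (i l : Fin n) (hil : ε i ≠ ε l)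
    (hA : ∀ a b, (2:ℤ)^j ∣ (A - diagonal ε) a b) :
    ∃ P Q : Matrix (Fin n) (Fin n) ℤ, P * Q = 1 ∧ Q * P = 1 ∧
      (∀ a b, (2:ℤ)^j ∣ (Q * A * P - diagonal ε) a b) ∧
      (∀ a b, ¬(a = i ∧ b = l) → (2:ℤ)^m ∣ (A - diagonal ε) a b →
        (2:ℤ)^m ∣ (Q * A * P - diagonal ε) a b) ∧
      (2:ℤ)^m ∣ (Q * A * P - diagonal ε) i l := by
  have hil' : i ≠ l := fun h => hil (h ▸ rfl)
  have hεl : ε l = -ε i := by rcases hε i with h1|h1 <;> rcases hε l with h2|h2 <;>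
    simp [h1, h2] at hil ⊢
  have hεi2 : ε i * ε i = 1 := by rcases hε i with h1|h1 <;> rw [h1] <;> ring
  set D := diagonal ε with hD
  set M := A - D with hMdef
  obtain ⟨t, ht⟩ := hA i l
  set c : ℤ := -ε i * (2^(j-1) * t) with hc
  have hcdvd : (2:ℤ)^(j-1) ∣ c := ⟨-ε i * t, by ring⟩
  have hpowj : (2:ℤ) * 2^(j-1) = 2^j := by
    rw [← pow_succ']
    congr 1
    omega
  have h2c : 2 * (ε i * c) = - M i l := by
    calc 2 * (ε i * c) = (ε i * ε i) * (-((2 * 2^(j-1)) * t)) := by ring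
    _ = -(2^j * t) := by rw [hεi2, hpowj]; ring
    _ = - M i l := by rw [← ht]
  set E := single i l c with hE
  have hEE : E * E = 0 := Matrix.single_mul_single_of_ne (c := c) i l i (Ne.symm hil') c
  have hPQ1 : (1 + E) * (1 - E) = 1 := by
    have h1 : (1 + E) * (1 - E) = 1 - E * E := by noncomm_ring
    rw [h1, hEE, sub_zero]
  have hQP1 : (1 - E) * (1 + E) = 1 := by
    have h1 : (1 - E) * (1 + E) = 1 - E * E := by noncomm_ring
    rw [h1, hEE, sub_zero]
  set N := (1 - E) * A * (1 + E) - D with hNdef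
  have hNM : N = M + (A * E - E * A - E * A * E) := by
    rw [hNdef, hMdef]
    noncomm_ring
  have hAE : ∀ a b, (A * E) a b = if b = l then A a i * c else 0 := by
    intro a b
    by_cases hb : b = l
    · subst hb; simp [hE]
    · simp [hb, hE, Matrix.mul_single_apply_of_ne (c := c) i l a b hb]
  have hEA : ∀ a b, (E * A) a b = if a = i then c * A l b else 0 := by
    intro a b
    by_cases ha : a = i
    · subst ha; simp [hE]
    · simp [ha, hE, Matrix.single_mul_apply_of_ne (c := c) i l a b ha]
  have hEAE : ∀ a b, (E * A * E) a b = if a = i ∧ b = l then c * A l i * c else 0 := by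
    intro a b
    by_cases hb : b = l
    · rw [hb]
      have h1 : (E * A * E) a l = (E * A) a i * c :=
        Matrix.mul_single_apply_same (c := c) i l a (E * A)
      rw [h1, hEA]
      by_cases ha : a = i <;> simp [ha]
    · rw [show E * A * E = (E * A) * E from rfl, Matrix.mul_single_apply_of_ne (c := c) i l a b hb]
      simp [hb]
  have hNab : ∀ a b, N a b = M a b + ((if b = l then A a i * c else 0)
      - (if a = i then c * A l b else 0) - (if a = i ∧ b = l then c * A l i * c else 0)) := by
    intro a b
    rw [hNM]
    simp only [Matrix.add_apply, Matrix.sub_apply]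
    rw [hAE, hEA, hEAE]
  have hpowm : ((2:ℤ)^m) ∣ 2^(j-1) * 2^j := by
    rw [← pow_add]; exact pow_dvd_pow 2 (by omega)
  have hcM : ∀ x y : Fin n, (2:ℤ)^m ∣ c * M x y := fun x y =>
    dvd_trans hpowm (mul_dvd_mul hcdvd (hA x y))
  have hMc : ∀ x y : Fin n, (2:ℤ)^m ∣ M x y * c := fun x y =>
    (mul_comm c (M x y)) ▸ hcM x y
  have hAoff : ∀ a b : Fin n, a ≠ b → A a b = M a b := by
    intro a b hab
    rw [hMdef]
    simp [hD, Matrix.sub_apply, diagonal_apply_ne _ hab]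
  have F1 : ∀ a b, ¬(a = i ∧ b = l) → (2:ℤ)^m ∣ N a b - M a b := by
    intro a b hnot
    have hX : N a b - M a b = (if b = l then A a i * c else 0)
        - (if a = i then c * A l b else 0) - (if a = i ∧ b = l then c * A l i * c else 0) := by
      rw [hNab]; ring
    rw [hX, if_neg hnot, sub_zero]
    by_cases ha : a = i
    · have hb : b ≠ l := fun hb => hnot ⟨ha, hb⟩
      rw [if_neg hb, if_pos ha, zero_sub]
      rw [hAoff l b (fun h => hb h.symm)]
      exact (hcM l b).neg_right
    · rw [if_neg ha, sub_zero]
      by_cases hb : b = l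
      · rw [if_pos hb, hAoff a i ha]
        exact hMc a i
      · rw [if_neg hb]
        exact dvd_zero _
  have hAii : A i i = M i i + ε i := by
    rw [hMdef]
    simp [hD, Matrix.sub_apply]
  have hAll : A l l = M l l + ε l := by
    rw [hMdef]
    simp [hD, Matrix.sub_apply]
  have hAli : A l i = M l i := hAoff l i (Ne.symm hil')
  have F2 : (2:ℤ)^m ∣ N i l := by
    have h1 : N i l = M i l + (A i i * c - c * A l l - c * A l i * c) := by
      rw [hNab]
      simp
    have h2 : N i l = M i i * c - c * M l l - c * M l i * c := by
      rw [h1, hAii, hAll, hAli, hεl]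
      linear_combination h2c
    rw [h2]
    exact dvd_sub (dvd_sub (hMc i i) (hcM l l)) ((hcM l i).mul_right c)
  refine ⟨1 + E, 1 - E, hPQ1, hQP1, ?_, ?_, F2⟩
  · intro a b
    show (2:ℤ)^j ∣ N a b
    by_cases h : a = i ∧ b = l
    · obtain ⟨rfl, rfl⟩ := h
      exact (pow_dvd_pow 2 hmj).trans F2
    · have h3 : N a b = M a b + (N a b - M a b) := by ring
      rw [h3]
      exact dvd_add (hA a b) ((pow_dvd_pow 2 hmj).trans (F1 a b h))
  · intro a b hnot hold
    show (2:ℤ)^m ∣ N a b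
    have h3 : N a b = M a b + (N a b - M a b) := by ring
    rw [h3]
    exact dvd_add hold (F1 a b hnot)

lemma inner_loop (ε : Fin n → ℤ) (hε : ∀ i, ε i = 1 ∨ ε i = -1)
    (j m : ℕ) (hj2 : 2 ≤ j) (hmj : j ≤ m) (hm2j : m + 1 ≤ 2*j) :
    ∀ (L : List (Fin n × Fin n)) (A : Matrix (Fin n) (Fin n) ℤ),
      (∀ a b, (2:ℤ)^j ∣ (A - diagonal ε) a b) →
      (∀ a b, ε a ≠ ε b → (a, b) ∉ L → (2:ℤ)^m ∣ (A - diagonal ε) a b) →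
      ∃ P Q : Matrix (Fin n) (Fin n) ℤ, P * Q = 1 ∧ Q * P = 1 ∧
        (∀ a b, (2:ℤ)^j ∣ (Q * A * P - diagonal ε) a b) ∧
        (∀ a b, ε a ≠ ε b → (2:ℤ)^m ∣ (Q * A * P - diagonal ε) a b) := by
  intro L
  induction L with
  | nil =>
    intro A h1 h2
    refine ⟨1, 1, one_mul 1, one_mul 1, ?_, ?_⟩
    · simpa using h1
    · intro a b hab
      simpa using h2 a b hab List.not_mem_nil
  | cons hd L ih =>
    intro A h1 h2
    obtain ⟨i, l⟩ := hd
    by_cases hil : ε i = ε l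
    · -- skip this pair
      have h2' : ∀ a b, ε a ≠ ε b → (a, b) ∉ L → (2:ℤ)^m ∣ (A - diagonal ε) a b := by
        intro a b hab hmem
        refine h2 a b hab ?_
        simp only [List.mem_cons, not_or]
        refine ⟨?_, hmem⟩
        intro heq
        apply hab
        rw [show a = i by exact congrArg Prod.fst heq, show b = l by exact congrArg Prod.snd heq, hil]
      exact ih A h1 h2'
    · obtain ⟨P₁, Q₁, hPQ₁, hQP₁, k1, k2, k3⟩ :=
        transvec_step ε hε j m hj2 hmj hm2j A i l hil h1
      have h2' : ∀ a b, ε a ≠ ε b → (a, b) ∉ L →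
          (2:ℤ)^m ∣ (Q₁ * A * P₁ - diagonal ε) a b := by
        intro a b hab hmem
        by_cases hab' : a = i ∧ b = l
        · obtain ⟨rfl, rfl⟩ := hab'
          exact k3
        · refine k2 a b hab' (h2 a b hab ?_)
          simp only [List.mem_cons, not_or]
          refine ⟨?_, hmem⟩
          intro heq
          exact hab' ⟨congrArg Prod.fst heq, congrArg Prod.snd heq⟩
      obtain ⟨P₂, Q₂, hPQ₂, hQP₂, j1, j2⟩ := ih (Q₁ * A * P₁) k1 h2'
      refine ⟨P₁ * P₂, Q₂ * Q₁, ?_, ?_, ?_, ?_⟩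
      · calc P₁ * P₂ * (Q₂ * Q₁) = P₁ * (P₂ * Q₂) * Q₁ := by noncomm_ring
        _ = 1 := by rw [hPQ₂, Matrix.mul_one, hPQ₁]
      · calc Q₂ * Q₁ * (P₁ * P₂) = Q₂ * (Q₁ * P₁) * P₂ := by noncomm_ring
        _ = 1 := by rw [hQP₁, Matrix.mul_one, hQP₂]
      · have : Q₂ * Q₁ * A * (P₁ * P₂) = Q₂ * (Q₁ * A * P₁) * P₂ := by noncomm_ring
        rw [this]
        exact j1
      · have : Q₂ * Q₁ * A * (P₁ * P₂) = Q₂ * (Q₁ * A * P₁) * P₂ := by noncomm_ring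
        rw [this]
        exact j2

lemma square_step (ε : Fin n → ℤ) (hε : ∀ i, ε i = 1 ∨ ε i = -1)
    (j m K : ℕ) (hmj : j ≤ m) (hm2j : m + 1 ≤ 2*j) (hmk : m ≤ K)
    (A : Matrix (Fin n) (Fin n) ℤ)
    (hsq : ∀ a b, (2:ℤ)^(K+1) ∣ (A * A - 1) a b)
    (h1 : ∀ a b, (2:ℤ)^j ∣ (A - diagonal ε) a b)
    (h2 : ∀ a b, ε a ≠ ε b → (2:ℤ)^m ∣ (A - diagonal ε) a b) :
    ∀ a b, (2:ℤ)^m ∣ (A - diagonal ε) a b := by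
  intro a b
  by_cases hab : ε a = ε b
  swap
  · exact h2 a b hab
  set D := diagonal ε with hD
  set M := A - D with hMdef
  have hD2 : D * D = 1 := by
    rw [hD, diagonal_mul_diagonal]
    have : (fun i => ε i * ε i) = fun _ => (1:ℤ) := by
      funext i
      rcases hε i with h|h <;> rw [h] <;> ring
    rw [this, diagonal_one]
  have hId : A * A - 1 = D * M + M * D + M * M := by
    have hA : A = D + M := by rw [hMdef]; noncomm_ring
    rw [hA, ← hD2]
    noncomm_ring
  have hEntry : (A * A - 1) a b = 2 * (ε a * M a b) + (M * M) a b := by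
    rw [hId]
    simp only [Matrix.add_apply]
    rw [hD, diagonal_mul, mul_diagonal, hab]
    ring
  have hMM : (2:ℤ)^(m+1) ∣ (M * M) a b := by
    rw [Matrix.mul_apply]
    refine Finset.dvd_sum fun x _ => ?_
    have := mul_dvd_mul (h1 a x) (h1 x b)
    rw [← pow_add] at this
    exact (pow_dvd_pow 2 (by omega)).trans this
  have hMain : (2:ℤ)^(m+1) ∣ 2 * (ε a * M a b) := by
    have h3 : 2 * (ε a * M a b) = (A * A - 1) a b - (M * M) a b := by
      rw [hEntry]; ring
    rw [h3]
    exact dvd_sub ((pow_dvd_pow 2 (by omega)).trans (hsq a b)) hMM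
  have hPow : ((2:ℤ)^(m+1)) = 2 * 2^m := by rw [pow_succ]; ring
  rw [hPow] at hMain
  have h4 : (2:ℤ)^m ∣ ε a * M a b := (mul_dvd_mul_iff_left (by norm_num : (2:ℤ) ≠ 0)).mp hMain
  have h5 : M a b = ε a * (ε a * M a b) := by
    have : ε a * ε a = 1 := by rcases hε a with h|h <;> rw [h] <;> ring
    rw [← mul_assoc, this, one_mul]
  rw [h5]
  exact h4.mul_left _

lemma outer_loop (ε : Fin n → ℤ) (hε : ∀ i, ε i = 1 ∨ ε i = -1) (K : ℕ) :
    ∀ (fuel j : ℕ), 2 ≤ j → K ≤ j + fuel →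
    ∀ A : Matrix (Fin n) (Fin n) ℤ,
      (∀ a b, (2:ℤ)^(K+1) ∣ (A * A - 1) a b) →
      (∀ a b, (2:ℤ)^j ∣ (A - diagonal ε) a b) →
      ∃ P Q : Matrix (Fin n) (Fin n) ℤ, P * Q = 1 ∧ Q * P = 1 ∧
        ∀ a b, (2:ℤ)^K ∣ (Q * A * P - diagonal ε) a b := by
  intro fuel
  induction fuel with
  | zero =>
    intro j hj2 hKj A hsq h1
    refine ⟨1, 1, one_mul 1, one_mul 1, ?_⟩
    intro a b
    have : (1 : Matrix (Fin n) (Fin n) ℤ) * A * 1 = A := by noncomm_ring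
    rw [this]
    exact (pow_dvd_pow 2 (by omega)).trans (h1 a b)
  | succ fuel ih =>
    intro j hj2 hKj A hsq h1
    by_cases hKj' : K ≤ j
    · refine ⟨1, 1, one_mul 1, one_mul 1, ?_⟩
      intro a b
      have : (1 : Matrix (Fin n) (Fin n) ℤ) * A * 1 = A := by noncomm_ring
      rw [this]
      exact (pow_dvd_pow 2 hKj').trans (h1 a b)
    · set m := min K (2*j - 1) with hm
      have hmj : j ≤ m := by omega
      have hm2j : m + 1 ≤ 2*j := by omega
      have hmK : m ≤ K := by omega
      obtain ⟨P₁, Q₁, hPQ₁, hQP₁, i1, i2⟩ :=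
        inner_loop ε hε j m hj2 hmj hm2j ((Finset.univ : Finset (Fin n × Fin n)).toList) A h1
          (fun a b _ hmem => absurd (Finset.mem_toList.mpr (Finset.mem_univ _)) hmem)
      set A₁ := Q₁ * A * P₁ with hA₁
      have hsq₁ : ∀ a b, (2:ℤ)^(K+1) ∣ (A₁ * A₁ - 1) a b := by
        have hEq : A₁ * A₁ - 1 = Q₁ * (A * A - 1) * P₁ := by
          rw [hA₁]
          calc Q₁ * A * P₁ * (Q₁ * A * P₁) - 1
              = Q₁ * A * (P₁ * Q₁) * A * P₁ - 1 := by noncomm_ring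
            _ = Q₁ * (A * A) * P₁ - Q₁ * P₁ := by rw [hPQ₁, hQP₁]; noncomm_ring
            _ = Q₁ * (A * A - 1) * P₁ := by noncomm_ring
        rw [hEq]
        exact fun a b => dvd_entries_mul_right (dvd_entries_mul_left hsq Q₁) P₁ a b
      have hstep : ∀ a b, (2:ℤ)^m ∣ (A₁ - diagonal ε) a b :=
        square_step ε hε j m K hmj hm2j hmK A₁ hsq₁ i1 i2
      obtain ⟨P₂, Q₂, hPQ₂, hQP₂, hfin⟩ := ih m (by omega) (by omega) A₁ hsq₁ hstep
      refine ⟨P₁ * P₂, Q₂ * Q₁, ?_, ?_, ?_⟩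
      · calc P₁ * P₂ * (Q₂ * Q₁) = P₁ * (P₂ * Q₂) * Q₁ := by noncomm_ring
        _ = 1 := by rw [hPQ₂, Matrix.mul_one, hPQ₁]
      · calc Q₂ * Q₁ * (P₁ * P₂) = Q₂ * (Q₁ * P₁) * P₂ := by noncomm_ring
        _ = 1 := by rw [hQP₁, Matrix.mul_one, hQP₂]
      · have hEq : Q₂ * Q₁ * A * (P₁ * P₂) = Q₂ * A₁ * P₂ := by
          rw [hA₁]; noncomm_ring
        rw [hEq]
        exact hfin

lemma field_stage (M : Matrix (Fin n) (Fin n) (ZMod 2)) (hM : M * M = M) :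
    ∃ (P Q : Matrix (Fin n) (Fin n) ℤ) (δ : Fin n → ℤ),
      P * Q = 1 ∧ Q * P = 1 ∧ (∀ i, δ i = 0 ∨ δ i = 1) ∧
      M * (P.map (Int.cast : ℤ → ZMod 2))
        = (P.map (Int.cast : ℤ → ZMod 2)) * diagonal (fun i => ((δ i : ℤ) : ZMod 2)) := by
  classical
  let f : (Fin n → (ZMod 2)) →ₗ[ZMod 2] (Fin n → (ZMod 2)) := M.mulVecLin
  have hff : f ∘ₗ f = f := by
    show M.mulVecLin ∘ₗ M.mulVecLin = M.mulVecLin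
    rw [← Matrix.mulVecLin_mul, hM]
  obtain ⟨p, hp⟩ := (LinearMap.isProj_iff_isIdempotentElem f).mpr hff
  have hcompl : IsCompl p (LinearMap.ker f) := hp.isCompl
  let e := Submodule.prodEquivOfIsCompl p (LinearMap.ker f) hcompl
  let b₁ := Module.finBasis (ZMod 2) p
  let b₂ := Module.finBasis (ZMod 2) (LinearMap.ker f)
  have hrs : Module.finrank (ZMod 2) p + Module.finrank (ZMod 2) (LinearMap.ker f) = n := by
    have h := Submodule.finrank_add_eq_of_isCompl hcompl
    rwa [Module.finrank_pi, Fintype.card_fin] at h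
  let σ : (Fin (Module.finrank (ZMod 2) ↥p) ⊕ Fin (Module.finrank (ZMod 2) ↥(LinearMap.ker f))) ≃ Fin n :=
    finSumFinEquiv.trans (finCongr hrs)
  let bb : Module.Basis (Fin n) (ZMod 2) (Fin n → (ZMod 2)) := ((b₁.prod b₂).map e).reindex σ
  let δ : Fin n → ℤ := fun i0 => Sum.elim (fun _ => (1:ℤ)) (fun _ => (0:ℤ)) (σ.symm i0)
  have hδ : ∀ i0, δ i0 = 0 ∨ δ i0 = 1 := by
    intro i0
    show Sum.elim _ _ (σ.symm i0) = 0 ∨ Sum.elim _ _ (σ.symm i0) = 1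
    cases σ.symm i0 <;> simp
  have hkey : ∀ i0, f (bb i0) = ((δ i0 : ℤ) : (ZMod 2)) • bb i0 := by
    intro i0
    have hbb : bb i0 = e ((b₁.prod b₂) (σ.symm i0)) := by
      simp [bb, Module.Basis.reindex_apply, Module.Basis.map_apply]
    have hδi : (δ i0 : (ZMod 2)) = Sum.elim (fun _ => (1:ZMod 2)) (fun _ => (0:ZMod 2)) (σ.symm i0) := by
      show ((Sum.elim (fun _ => (1:ℤ)) (fun _ => (0:ℤ)) (σ.symm i0) : ℤ) : (ZMod 2)) = _
      cases σ.symm i0 <;> simp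
    rcases hσ : σ.symm i0 with a | a
    · have h1 : (b₁.prod b₂) (Sum.inl a) = ((b₁ a, 0) : ↥p × ↥(LinearMap.ker f)) := by
        simp [Module.Basis.prod_apply]
      have h2 : e ((b₁ a, 0) : ↥p × ↥(LinearMap.ker f)) = (b₁ a : Fin n → (ZMod 2)) := by
        rw [Submodule.coe_prodEquivOfIsCompl']
        simp
      have h3 : bb i0 = (b₁ a : Fin n → (ZMod 2)) := by rw [hbb, hσ, h1, h2]
      rw [h3, hδi, hσ]
      simp only [Sum.elim_inl, one_smul]
      exact hp.map_id _ (b₁ a).2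
    · have h1 : (b₁.prod b₂) (Sum.inr a) = ((0, b₂ a) : ↥p × ↥(LinearMap.ker f)) := by
        simp [Module.Basis.prod_apply]
      have h2 : e ((0, b₂ a) : ↥p × ↥(LinearMap.ker f)) = (b₂ a : Fin n → (ZMod 2)) := by
        rw [Submodule.coe_prodEquivOfIsCompl']
        simp
      have h3 : bb i0 = (b₂ a : Fin n → (ZMod 2)) := by rw [hbb, hσ, h1, h2]
      rw [h3, hδi, hσ]
      simp only [Sum.elim_inr, zero_smul]
      exact LinearMap.mem_ker.mp (b₂ a).2
  let g : Matrix (Fin n) (Fin n) (ZMod 2) := Matrix.of fun a b => bb b a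
  have hg : g = (Pi.basisFun (ZMod 2) (Fin n)).toMatrix bb := by
    ext a b
    simp [g, Module.Basis.toMatrix_apply, Pi.basisFun_repr]
  have hInv : Invertible g := by
    rw [hg]
    exact (Pi.basisFun (ZMod 2) (Fin n)).invertibleToMatrix bb
  have hMg : M * g = g * diagonal (fun i => ((δ i : ℤ) : (ZMod 2))) := by
    ext a b
    rw [Matrix.mul_apply, Matrix.mul_diagonal]
    have h5 : f (bb b) a = ∑ k, M a k * bb b k := by
      show (M.mulVecLin (bb b)) a = _
      rw [Matrix.mulVecLin_apply]
      simp [Matrix.mulVec, dotProduct]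
    have h6 : ∑ k, M a k * g k b = f (bb b) a := by rw [h5]; rfl
    rw [h6, hkey b]
    show ((δ b : ℤ) : (ZMod 2)) * bb b a = g a b * ((δ b : ℤ) : (ZMod 2))
    rw [mul_comm]
    rfl
  obtain ⟨L, L', dd, hdec⟩ := Matrix.Pivot.exists_list_transvec_mul_diagonal_mul_list_transvec g
  have hdd : diagonal dd = 1 := by
    have hdet : IsUnit (diagonal dd).det := by
      have hunit : IsUnit g.det := Matrix.isUnit_det_of_invertible g
      rw [hdec] at hunit
      simpa only [Matrix.det_mul, Matrix.TransvectionStruct.det_toMatrix_prod, one_mul,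
        mul_one] using hunit
    have hall : ∀ i1, dd i1 = 1 := by
      intro i1
      by_contra hne
      have h0 : dd i1 = 0 := (by decide : ∀ x : ZMod 2, ¬ x = 1 → x = 0) _ hne
      rw [Matrix.det_diagonal] at hdet
      rw [Finset.prod_eq_zero (Finset.mem_univ i1) h0] at hdet
      rw [isUnit_zero_iff] at hdet
      exact (by decide : (0 : ZMod 2) ≠ 1) hdet
    rw [show dd = fun _ => (1:ZMod 2) from funext hall, diagonal_one]
  rw [hdd, mul_one] at hdec
  have hgprod : g = (List.map Matrix.TransvectionStruct.toMatrix (L ++ L')).prod := by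
    rw [List.map_append, List.prod_append]
    exact hdec
  let LZ : List (Matrix.TransvectionStruct (Fin n) ℤ) :=
    (L ++ L').map fun t => ⟨t.i, t.j, t.hij, ((t.c.val : ℤ))⟩
  refine ⟨(LZ.map Matrix.TransvectionStruct.toMatrix).prod,
    (LZ.reverse.map
      (Matrix.TransvectionStruct.toMatrix ∘ Matrix.TransvectionStruct.inv)).prod, δ,
    Matrix.TransvectionStruct.prod_mul_reverse_inv_prod LZ,
    Matrix.TransvectionStruct.reverse_inv_prod_mul_prod LZ, hδ, ?_⟩
  have hmap : ((LZ.map Matrix.TransvectionStruct.toMatrix).prod).map (Int.cast : ℤ → (ZMod 2)) = g := by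
    have hφ : ((LZ.map Matrix.TransvectionStruct.toMatrix).prod).map (Int.cast : ℤ → (ZMod 2))
        = (Int.castRingHom (ZMod 2)).mapMatrix ((LZ.map Matrix.TransvectionStruct.toMatrix).prod) := rfl
    rw [hφ, map_list_prod, hgprod]
    congr 1
    show List.map (⇑(Int.castRingHom (ZMod 2)).mapMatrix) (LZ.map Matrix.TransvectionStruct.toMatrix) = _
    rw [List.map_map]
    show ((L ++ L').map _).map _ = _
    rw [List.map_map]
    apply List.map_congr_left
    intro t _
    obtain ⟨ti, tj, thij, tc⟩ := t
    show (Int.castRingHom (ZMod 2)).mapMatrix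
      (Matrix.TransvectionStruct.toMatrix ⟨ti, tj, thij, ((tc.val : ℤ))⟩)
      = Matrix.TransvectionStruct.toMatrix ⟨ti, tj, thij, tc⟩
    rw [Matrix.TransvectionStruct.toMatrix_mk, Matrix.TransvectionStruct.toMatrix_mk]
    show (Matrix.transvection ti tj ((tc.val : ℤ))).map (Int.cast : ℤ → (ZMod 2)) = _
    ext a b
    simp only [Matrix.transvection, Matrix.map_apply, Matrix.add_apply, Matrix.one_apply,
      Matrix.single, Matrix.of_apply]
    push_cast
    split_ifs <;> simp [ZMod.natCast_val, ZMod.cast_id]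
  rw [hmap, hMg]

end DiagInvol

open DiagInvol in
/-- If A ∈ GL(n,ℤ) satisfies A ≡ I (mod 2) and A² ≡ I (mod 2^(k+1)) for k ≥ 2, then
A is GL(n,ℤ)-conjugate, mod 2^k, to a diagonal matrix with entries ±1. -/
theorem diagonalize_involution_mod_2k (n k : ℕ) (hk : 2 ≤ k)
    (A : Matrix (Fin n) (Fin n) ℤ) (hA : IsUnit A.det)
    (h2 : ∀ i j, (2 : ℤ) ∣ (A - 1) i j)
    (h2k : ∀ i j, ((2 : ℤ) ^ (k + 1)) ∣ (A * A - 1) i j) :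
    ∃ p : Matrix (Fin n) (Fin n) ℤ, IsUnit p.det ∧
      ∃ ε : Fin n → ℤ, (∀ i, ε i = 1 ∨ ε i = -1) ∧
        ∀ i j, ((2 : ℤ) ^ k) ∣ (p⁻¹ * A * p - diagonal ε) i j := by
  classical
  set B : Matrix (Fin n) (Fin n) ℤ := Matrix.of fun a b => (A - 1) a b / 2 with hBdef
  have hB : ∀ a b, (A - 1) a b = 2 * B a b := fun a b => (Int.mul_ediv_cancel' (h2 a b)).symm
  have hA1 : A = 1 + (B + B) := by
    ext a b
    have := hB a b
    simp only [Matrix.sub_apply, Matrix.add_apply] at this ⊢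
    omega
  -- B is idempotent mod 2
  have hBB : ∀ a b, (2:ℤ) ∣ (B * B + B) a b := by
    intro a b
    have hAA : A * A - 1 = ((B * B + B) + (B * B + B)) + ((B * B + B) + (B * B + B)) := by
      rw [hA1]
      noncomm_ring
    have h8 : (2:ℤ)^3 ∣ (A * A - 1) a b := (pow_dvd_pow 2 (by omega)).trans (h2k a b)
    rw [hAA] at h8
    simp only [Matrix.add_apply] at h8
    obtain ⟨t, ht⟩ := h8
    refine ⟨t, ?_⟩
    simp only [Matrix.add_apply] at ht ⊢
    linarith
  set M₂ : Matrix (Fin n) (Fin n) (ZMod 2) := B.map (Int.cast : ℤ → ZMod 2) with hM₂def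
  have hφ : ∀ X : Matrix (Fin n) (Fin n) ℤ,
      X.map (Int.cast : ℤ → ZMod 2) = (Int.castRingHom (ZMod 2)).mapMatrix X := fun _ => rfl
  have hMM : M₂ * M₂ = M₂ := by
    have hzero : (B * B + B).map (Int.cast : ℤ → ZMod 2) = 0 := by
      ext a b
      rw [Matrix.map_apply]
      show (((B * B + B) a b : ℤ) : ZMod 2) = 0
      rw [ZMod.intCast_zmod_eq_zero_iff_dvd]
      exact_mod_cast hBB a b
    have hmm : M₂ * M₂ + M₂ = 0 := by
      have h := hzero
      rw [hφ, _root_.map_add, _root_.map_mul] at h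
      rw [hM₂def, hφ]
      exact h
    have h1 : M₂ * M₂ = -M₂ := eq_neg_of_add_eq_zero_left hmm
    have h2' : -M₂ = M₂ := by
      ext a b
      show -(M₂ a b) = M₂ a b
      exact (by decide : ∀ x : ZMod 2, -x = x) _
    rw [h1, h2']
  obtain ⟨P₁, Q₁, δ, hPQ₁, hQP₁, hδ01, hfield⟩ := field_stage M₂ hMM
  set ε : Fin n → ℤ := fun i => 1 - 2 * δ i with hεdef
  have hε : ∀ i, ε i = 1 ∨ ε i = -1 := by
    intro i
    rcases hδ01 i with h | h <;> simp [hεdef, h]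
  have hDdiag : diagonal ε = 1 - (diagonal δ + diagonal δ) := by
    ext a b
    by_cases hab : a = b
    · subst hab
      simp [hεdef, Matrix.diagonal_apply_eq, Matrix.one_apply_eq]
      ring
    · simp [Matrix.diagonal_apply_ne _ hab, Matrix.one_apply_ne hab]
  set S : Matrix (Fin n) (Fin n) ℤ := B * P₁ + P₁ * diagonal δ with hSdef
  have hS2 : ∀ a b, (2:ℤ) ∣ S a b := by
    have hmapS : S.map (Int.cast : ℤ → ZMod 2) = 0 := by
      rw [hSdef, hφ, _root_.map_add, _root_.map_mul, _root_.map_mul,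
        ← hφ B, ← hφ P₁, ← hφ (diagonal δ)]
      have hdmap : (diagonal δ).map (Int.cast : ℤ → ZMod 2)
          = diagonal (fun i => ((δ i : ℤ) : ZMod 2)) := Matrix.diagonal_map (by simp)
      rw [hdmap, ← hM₂def, hfield]
      ext a b
      show (P₁.map (Int.cast : ℤ → ZMod 2) * diagonal (fun i => ((δ i : ℤ) : ZMod 2))) a b
          + (P₁.map (Int.cast : ℤ → ZMod 2) * diagonal (fun i => ((δ i : ℤ) : ZMod 2))) a b = 0
      rw [← two_mul]
      rw [show (2 : ZMod 2) = 0 by decide]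
      rw [zero_mul]
    intro a b
    have := congrFun (congrFun hmapS a) b
    rw [Matrix.map_apply] at this
    have h0 : ((S a b : ℤ) : ZMod 2) = 0 := this
    rw [ZMod.intCast_zmod_eq_zero_iff_dvd] at h0
    exact_mod_cast h0
  have hAPD : A * P₁ - P₁ * diagonal ε = S + S := by
    rw [hA1, hDdiag, hSdef]
    noncomm_ring
  set A₁ := Q₁ * A * P₁ with hA₁def
  have hA₁4 : ∀ a b, (2:ℤ)^2 ∣ (A₁ - diagonal ε) a b := by
    have hEq : A₁ - diagonal ε = Q₁ * (S + S) := by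
      rw [← hAPD, hA₁def, Matrix.mul_sub, ← Matrix.mul_assoc, ← Matrix.mul_assoc, hQP₁,
        Matrix.one_mul]
    rw [hEq]
    apply dvd_entries_mul_left
    intro a b
    obtain ⟨s, hs⟩ := hS2 a b
    exact ⟨s, by simp [Matrix.add_apply, hs]; ring⟩
  have hsq₁ : ∀ a b, (2:ℤ)^(k+1) ∣ (A₁ * A₁ - 1) a b := by
    have hEq : A₁ * A₁ - 1 = Q₁ * (A * A - 1) * P₁ := by
      rw [hA₁def]
      calc Q₁ * A * P₁ * (Q₁ * A * P₁) - 1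
          = Q₁ * A * (P₁ * Q₁) * A * P₁ - 1 := by noncomm_ring
        _ = Q₁ * (A * A) * P₁ - Q₁ * P₁ := by rw [hPQ₁, hQP₁]; noncomm_ring
        _ = Q₁ * (A * A - 1) * P₁ := by noncomm_ring
    rw [hEq]
    exact fun a b => dvd_entries_mul_right (dvd_entries_mul_left h2k Q₁) P₁ a b
  obtain ⟨P₂, Q₂, hPQ₂, hQP₂, hfin⟩ :=
    outer_loop ε hε k k 2 le_rfl (by omega) A₁ hsq₁ hA₁4
  refine ⟨P₁ * P₂, ?_, ε, hε, ?_⟩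
  · apply IsUnit.of_mul_eq_one ((Q₂ * Q₁).det)
    rw [← Matrix.det_mul]
    have : P₁ * P₂ * (Q₂ * Q₁) = P₁ * (P₂ * Q₂) * Q₁ := by noncomm_ring
    rw [this, hPQ₂, Matrix.mul_one, hPQ₁, Matrix.det_one]
  · have hqp : (Q₂ * Q₁) * (P₁ * P₂) = 1 := by
      have : Q₂ * Q₁ * (P₁ * P₂) = Q₂ * (Q₁ * P₁) * P₂ := by noncomm_ring
      rw [this, hQP₁, Matrix.mul_one, hQP₂]
    have hinv : (P₁ * P₂)⁻¹ = Q₂ * Q₁ := Matrix.inv_eq_left_inv hqp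
    rw [hinv]
    have hEq : Q₂ * Q₁ * A * (P₁ * P₂) = Q₂ * A₁ * P₂ := by
      rw [hA₁def]; noncomm_ring
    rw [hEq]
    exact hfin
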